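/- arXiv:2602.08043 — 2 statements merged into one kernel-verified Lean document; each statement's English description precedes it below -/
import Mathlib

section
/- For any finite sequence x_1,...,x_n of real numbers with mean μ, maximum m, and minimum l, the variance satisfies σ² ≤ (m − μ)(μ − l). -/
/-- **Bhatia–Davis inequality**: for a finite sequence of reals with mean `μ`,
maximum `m` and minimum `l`, the population variance is at most `(m - μ)(μ - l)`. -/
theorem bhatia_davis (n : ℕ) (hn : 0 < n) (x : Fin n → ℝ) (m l μ : ℝ)
    (hμ : μ = (∑ i, x i) / n)
    (hub : ∀ i, x i ≤ m) (hm : ∃ i, x i = m)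
    (hlb : ∀ i, l ≤ x i) (hl : ∃ i, x i = l) :
    (∑ i, (x i - μ) ^ 2) / n ≤ (m - μ) * (μ - l) := by
  have hn' : (0:ℝ) < n := by exact_mod_cast hn
  have hS : ∑ i, x i = n * μ := by
    field_simp at hμ; linarith
  have hQ : ∑ i, (x i)^2 ≤ (m + l) * (∑ i, x i) - n * (m * l) := by
    calc ∑ i, (x i)^2 ≤ ∑ i, ((m + l) * x i - m * l) :=
          Finset.sum_le_sum fun i _ => by
            nlinarith [mul_nonneg (sub_nonneg.2 (hub i)) (sub_nonneg.2 (hlb i))]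
      _ = (m + l) * (∑ i, x i) - n * (m * l) := by
          rw [Finset.sum_sub_distrib, ← Finset.mul_sum, Finset.sum_const,
            Finset.card_fin, nsmul_eq_mul]
  have hexp : ∑ i, (x i - μ)^2 = ∑ i, (x i)^2 - 2*μ*(∑ i, x i) + n*μ^2 := by
    have : ∀ i : Fin n, (x i - μ)^2 = (x i)^2 - 2*μ*(x i) + μ^2 := fun i => by ring
    simp only [this, Finset.sum_add_distrib, Finset.sum_sub_distrib, ← Finset.mul_sum,
      Finset.sum_const, Finset.card_fin, nsmul_eq_mul]
  rw [hS] at hQ hexp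
  rw [div_le_iff₀ hn']
  nlinarith [hQ, hexp]
end

section
/- (AM–GM refinement of the extrema bound) For any sequence with minimum l, maximum m, and mean μ, the variance satisfies σ² ≤ (m − μ)(μ − l) ≤ ((m − l)/2)². Thus the standard deviation is at most half the range. -/
/-- AM–GM refinement of the extrema-variance bound (Bhatia–Davis plus Popoviciu):
`σ² ≤ (m - μ)(μ - l) ≤ ((m - l)/2)²`, so the standard deviation is at most half the range. -/
theorem extrema_variance_amgm (n : ℕ) (hn : 0 < n) (x : Fin n → ℝ) (l m μ : ℝ)
    (hlb : ∀ i, l ≤ x i) (hl : ∃ i, x i = l)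
    (hub : ∀ i, x i ≤ m) (hm : ∃ i, x i = m)
    (hμ : μ = (∑ i, x i) / n) :
    (∑ i, (x i - μ) ^ 2) / n ≤ (m - μ) * (μ - l) ∧
    (m - μ) * (μ - l) ≤ ((m - l) / 2) ^ 2 ∧
    Real.sqrt ((∑ i, (x i - μ) ^ 2) / n) ≤ (m - l) / 2 := by
  obtain ⟨i0, hi0⟩ := hl
  have hlm : l ≤ m := hi0 ▸ hub i0
  have hn' : (0:ℝ) < n := by exact_mod_cast hn
  have hsum : ∑ i, x i = n * μ := by rw [hμ]; field_simp
  have hident : ∑ i, (x i - μ)^2 + ∑ i, (m - x i) * (x i - l) = n * ((m - μ) * (μ - l)) := by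
    have h1 : ∑ i, ((x i - μ)^2 + (m - x i) * (x i - l))
        = ∑ i, ((m + l - 2*μ) * x i + (μ^2 - m*l)) := by
      apply Finset.sum_congr rfl; intro i _; ring
    rw [← Finset.sum_add_distrib, h1, Finset.sum_add_distrib, ← Finset.mul_sum, hsum]
    simp [Finset.sum_const, Finset.card_univ]
    ring
  have h2 : 0 ≤ ∑ i, (m - x i) * (x i - l) :=
    Finset.sum_nonneg fun i _ => mul_nonneg (by linarith [hub i]) (by linarith [hlb i])
  have hBD : (∑ i, (x i - μ)^2) / n ≤ (m - μ) * (μ - l) := by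
    rw [div_le_iff₀ hn']
    nlinarith [hident]
  have hAM : (m - μ) * (μ - l) ≤ ((m - l)/2)^2 := by nlinarith [sq_nonneg (m + l - 2*μ)]
  refine ⟨hBD, hAM, ?_⟩
  have h0 : 0 ≤ (m - l)/2 := by linarith
  calc Real.sqrt ((∑ i, (x i - μ)^2)/n) ≤ Real.sqrt (((m-l)/2)^2) :=
        Real.sqrt_le_sqrt (le_trans hBD hAM)
    _ = (m-l)/2 := Real.sqrt_sq h0
end
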